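/- Let A be a one-clock timed automaton and w = e_1 e_2 … a timed word. For every n, if (q, t) is a configuration active at step n, then there exists j ∈ {0, 1, …, n} such that t = Σ_{i=j+1}^{n} δ_i, where δ_i = e_i if e_i ∈ ℝ>0 and δ_i = 0 if e_i ∈ Σ. Consequently, the set of active clock values at step n, i.e. {t ∈ ℝ≥0 : (q, t) ∈ K_n for some q}, has at most n + 1 elements. -/
import Mathlib


/-- Clock conditions over a set `X` of clocks:
`γ ::= true | x < c | x > c | x = c | γ ∧ γ | γ ∨ γ`. -/
inductive ClockCond (X : Type) where
  | tt : ClockCond X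
  | lt : X → ℝ → ClockCond X
  | gt : X → ℝ → ClockCond X
  | eq : X → ℝ → ClockCond X
  | conj : ClockCond X → ClockCond X → ClockCond X
  | disj : ClockCond X → ClockCond X → ClockCond X

/-- Satisfaction of a clock condition by a clock valuation `ν`. -/
def ClockCond.sat {X : Type} (ν : X → ℝ) : ClockCond X → Prop
  | .tt => True
  | .lt x c => ν x < c
  | .gt x c => ν x > c
  | .eq x c => ν x = c
  | .conj γ₁ γ₂ => γ₁.sat ν ∧ γ₂.sat ν
  | .disj γ₁ γ₂ => γ₁.sat ν ∨ γ₂.sat ν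

/-- A timed automaton with alphabet `A`, state set `Q`, and clock set `X`:
initial states, a transition relation `E ⊆ Q × A × C_X × Q × 2^X`,
and final states. -/
structure TimedAutomaton (A Q X : Type) where
  I : Set Q
  E : Set (Q × A × ClockCond X × Q × Set X)
  F : Set Q

/-- One step of a timed automaton on a stream element `e : A ⊕ ℝ`:
a time span increments all clocks; a letter fires a transition whose clock
condition is satisfied, resetting the clocks in its reset set. -/
def TimedAutomaton.Step {A Q X : Type} (M : TimedAutomaton A Q X)
    (e : A ⊕ ℝ) (c c' : Q × (X → ℝ)) : Prop :=
  match e with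
  | .inr r => c'.1 = c.1 ∧ ∀ x, c'.2 x = c.2 x + r
  | .inl a => ∃ γ Z, (c.1, a, γ, c'.1, Z) ∈ M.E ∧ γ.sat c.2 ∧
      (∀ x ∈ Z, c'.2 x = 0) ∧ (∀ x ∉ Z, c'.2 x = c.2 x)

/-- A run of a timed automaton on a timed word, from a configuration to a
configuration. -/
inductive TimedAutomaton.RunFrom {A Q X : Type} (M : TimedAutomaton A Q X) :
    List (A ⊕ ℝ) → (Q × (X → ℝ)) → (Q × (X → ℝ)) → Prop
  | nil (c) : M.RunFrom [] c c
  | cons {e w c c' c''} : M.Step e c c' → M.RunFrom w c' c'' →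
      M.RunFrom (e :: w) c c''

/-- A timed automaton accepts a timed word if it admits a successful run on
it: starting in an initial state with all clocks `0`, ending in a final
state. -/
def TimedAutomaton.Accepts {A Q X : Type} (M : TimedAutomaton A Q X)
    (w : List (A ⊕ ℝ)) : Prop :=
  ∃ q₀ ∈ M.I, ∃ c' : Q × (X → ℝ), M.RunFrom w (q₀, fun _ => 0) c' ∧ c'.1 ∈ M.F

/-- A timed word: all its real (time span) elements are positive. -/
def IsTimedWord {A : Type} (w : List (A ⊕ ℝ)) : Prop :=
  ∀ e ∈ w, ∀ r : ℝ, e = Sum.inr r → 0 < r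

/-- `M.Active w n` is the set `K_n` of configurations `(q, t)` of a one-clock
timed automaton that are active at step `n` of the stream `w`, i.e. reachable
by a run on the prefix `w[1…n]` from some initial configuration `(q₀, 0)`. -/
def TimedAutomaton.Active {A Q : Type} (M : TimedAutomaton A Q Unit)
    (w : List (A ⊕ ℝ)) (n : ℕ) : Set (Q × ℝ) :=
  {c | ∃ q₀ ∈ M.I, M.RunFrom (w.take n) (q₀, fun _ => 0) (c.1, fun _ => c.2)}

/-- If `(q, t)` is active at step `n`, then `t` is the sum of the time spans
`δ_i` (with `δ_i = e_i` for a time span, `δ_i = 0` for a letter) over some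
suffix `i ∈ {j+1, …, n}` of the prefix `w[1…n]`.  Consequently the set of
active clock values at step `n` is finite, of cardinality at most `n + 1`. -/

private lemma run_clock_aux {A Q : Type} (M : TimedAutomaton A Q Unit) :
    ∀ (l : List (A ⊕ ℝ)) (c c' : Q × (Unit → ℝ)), M.RunFrom l c c' →
      c'.2 () = c.2 () + (l.map (Sum.elim (fun _ => 0) id)).sum ∨
      ∃ j ≤ l.length, c'.2 () = ((l.drop j).map (Sum.elim (fun _ => 0) id)).sum := by
  intro l c c' h
  induction h with
  | nil c => left; simp
  | @cons e wl c c' c'' step run ih =>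
    match e with
    | .inr r =>
      obtain ⟨h1, h2⟩ := step
      rcases ih with h | ⟨j, hj, h⟩
      · left; rw [h, h2]; simp; ring
      · right; exact ⟨j + 1, by simpa using Nat.succ_le_succ hj, by simpa using h⟩
    | .inl a =>
      obtain ⟨γ, Z, _, _, hz, hnz⟩ := step
      by_cases hmem : () ∈ Z
      · have h0 : c'.2 () = 0 := hz () hmem
        rcases ih with h | ⟨j, hj, h⟩
        · right; exact ⟨1, by simp, by rw [h, h0]; simp⟩
        · right; exact ⟨j + 1, by simpa using Nat.succ_le_succ hj, by simpa using h⟩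
      · have h0 : c'.2 () = c.2 () := hnz () hmem
        rcases ih with h | ⟨j, hj, h⟩
        · left; rw [h, h0]; simp
        · right; exact ⟨j + 1, by simpa using Nat.succ_le_succ hj, by simpa using h⟩

theorem stmt5 {A Q : Type} (M : TimedAutomaton A Q Unit)
    (w : List (A ⊕ ℝ)) (hw : IsTimedWord w) (n : ℕ) :
    (∀ q : Q, ∀ t : ℝ, (q, t) ∈ M.Active w n →
      ∃ j ≤ n, t = (((w.take n).drop j).map (Sum.elim (fun _ => 0) id)).sum) ∧
    ({t : ℝ | ∃ q : Q, (q, t) ∈ M.Active w n}.Finite ∧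
      {t : ℝ | ∃ q : Q, (q, t) ∈ M.Active w n}.ncard ≤ n + 1) := by
  constructor
  · rintro q t ⟨q₀, hq₀, hrun⟩
    rcases run_clock_aux M _ _ _ hrun with h | ⟨j, hj, h⟩
    · exact ⟨0, Nat.zero_le n, by simpa using h⟩
    · exact ⟨j, le_trans hj (by simpa using List.length_take_le n w), h⟩
  · have hsub : {t : ℝ | ∃ q : Q, (q, t) ∈ M.Active w n} ⊆
        ↑((Finset.range (n + 1)).image
          (fun j => (((w.take n).drop j).map (Sum.elim (fun _ => 0) id)).sum)) := by
      rintro t ⟨q, q₀, hq₀, hrun⟩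
      rcases run_clock_aux M _ _ _ hrun with h | ⟨j, hj, h⟩
      · simp only [Finset.coe_image, Set.mem_image, Finset.mem_coe, Finset.mem_range]
        exact ⟨0, by omega, by simpa using h.symm⟩
      · simp only [Finset.coe_image, Set.mem_image, Finset.mem_coe, Finset.mem_range]
        have : j ≤ n := le_trans hj (by simpa using List.length_take_le n w)
        exact ⟨j, by omega, h.symm⟩
    have hfin := Set.Finite.subset (Finset.finite_toSet _) hsub
    refine ⟨hfin, ?_⟩
    calc {t : ℝ | ∃ q : Q, (q, t) ∈ M.Active w n}.ncard
        ≤ _ := Set.ncard_le_ncard hsub (Finset.finite_toSet _)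
      _ ≤ n + 1 := by
          rw [Set.ncard_coe_finset]
          exact le_trans (Finset.card_image_le) (by simp)
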